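/- Let Y be a p×n real matrix with p > n such that YᵀY is invertible, let S := (1/n)YYᵀ, let ȳ := (1/n)Y𝟙 (𝟙 the all-ones n-vector), and let S̃ := S - ȳȳᵀ. Let S⁺ and S̃⁺ be the Moore–Penrose inverses of S and S̃ respectively (i.e., matrices satisfying the four Penrose conditions). Then the empirical spectral distribution functions of S̃⁺ and S⁺ satisfy sup over t ∈ ℝ of |F^{S̃⁺}(t) − F^{S⁺}(t)| ≤ 2/p. -/

import Mathlib

open Matrix Module Submodule

variable {p : ℕ}

lemma matrix_rank_sub_le (A B : Matrix (Fin p) (Fin p) ℝ) :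
    (A - B).rank ≤ A.rank + B.rank := by
  classical
  have hle : LinearMap.range (A - B).mulVecLin ≤
      LinearMap.range A.mulVecLin ⊔ LinearMap.range B.mulVecLin := by
    rintro x ⟨v, rfl⟩
    have : (A - B).mulVecLin v = A.mulVecLin v + (-(B.mulVecLin v)) := by
      simp [Matrix.mulVecLin_apply, Matrix.sub_mulVec, sub_eq_add_neg, Matrix.neg_mulVec]
    rw [this]
    exact Submodule.add_mem_sup ⟨v, rfl⟩ (neg_mem ⟨v, rfl⟩)
  calc (A - B).rank ≤ finrank ℝ ((LinearMap.range A.mulVecLin ⊔ LinearMap.range B.mulVecLin : Submodule ℝ (Fin p → ℝ))) :=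
        Submodule.finrank_mono hle
    _ ≤ A.rank + B.rank := Submodule.finrank_add_le_finrank_add_finrank _ _

lemma rank_one_aux (a b : Fin p → ℝ) (X Z : Matrix (Fin p) (Fin p) ℝ) :
    (X * vecMulVec a b * Z).rank ≤ 1 := by
  calc (X * vecMulVec a b * Z).rank ≤ (X * vecMulVec a b).rank := rank_mul_le_left _ _
    _ ≤ (vecMulVec a b).rank := rank_mul_le_right _ _
    _ ≤ 1 := by
        rw [vecMulVec_eq Unit a b]
        calc (replicateCol Unit a * replicateRow Unit b).rank ≤ (replicateCol Unit a).rank := rank_mul_le_left _ _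
          _ ≤ Fintype.card Unit := rank_le_card_width _
          _ = 1 := Fintype.card_unit

lemma rank_diff_le_two {n : ℕ} (Y : Matrix (Fin p) (Fin n) ℝ)
    (hY : IsUnit (Yᵀ * Y))
    (S : Matrix (Fin p) (Fin p) ℝ) (hS : S = ((n : ℝ)⁻¹) • (Y * Yᵀ))
    (ybar : Fin p → ℝ) (hybar : ybar = ((n : ℝ)⁻¹) • Y.mulVec (fun _ => (1 : ℝ)))
    (St : Matrix (Fin p) (Fin p) ℝ) (hSt : St = S - vecMulVec ybar ybar)
    (Sp Stp : Matrix (Fin p) (Fin p) ℝ)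
    (hSp1 : S * Sp * S = S) (hSp2 : Sp * S * Sp = Sp)
    (hSp3 : (S * Sp)ᵀ = S * Sp)
    (hStp1 : St * Stp * St = St) (hStp2 : Stp * St * Stp = Stp)
    (hStp3 : (St * Stp)ᵀ = St * Stp)
    (hSpH : Sp.IsHermitian) (hStpH : Stp.IsHermitian) :
    (Stp - Sp).rank ≤ 2 := by
  classical
  have SpT : Spᵀ = Sp := by
    have := hSpH; rwa [Matrix.IsHermitian, conjTranspose_eq_transpose_of_trivial] at this
  have StpT : Stpᵀ = Stp := by
    have := hStpH; rwa [Matrix.IsHermitian, conjTranspose_eq_transpose_of_trivial] at this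
  have ST : Sᵀ = S := by
    rw [hS, transpose_smul, transpose_mul, transpose_transpose]
  have yyT : (vecMulVec ybar ybar)ᵀ = vecMulVec ybar ybar := by
    ext i j; simp [vecMulVec_apply, transpose_apply, mul_comm]
  have StT : Stᵀ = St := by rw [hSt, transpose_sub, ST, yyT]
  have comm1 : Sp * S = S * Sp := by
    conv_lhs => rw [← SpT, ← ST, ← transpose_mul, hSp3]
  have comm2 : Stp * St = St * Stp := by
    conv_lhs => rw [← StpT, ← StT, ← transpose_mul, hStp3]
  -- Y = S * Z
  set Z : Matrix (Fin p) (Fin n) ℝ := (n : ℝ) • (Y * (Yᵀ * Y)⁻¹) with hZ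
  have hYZ : Y = S * Z := by
    rcases eq_or_ne n 0 with h0 | h0
    · subst h0; ext i j; exact Fin.elim0 j
    · have hdet : IsUnit (Yᵀ * Y).det := (isUnit_iff_isUnit_det _).mp hY
      have hinv : Yᵀ * Y * (Yᵀ * Y)⁻¹ = 1 := mul_nonsing_inv _ hdet
      have hn : ((n : ℝ)⁻¹ * (n : ℝ)) = 1 := by
        rw [inv_mul_cancel₀]; exact_mod_cast h0
      rw [hS, hZ, Matrix.smul_mul, Matrix.mul_smul, smul_smul, hn, one_smul,
        Matrix.mul_assoc, ← Matrix.mul_assoc Yᵀ Y, hinv, Matrix.mul_one]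
  set w : Fin n → ℝ := (n : ℝ)⁻¹ • (fun _ => (1 : ℝ)) with hw
  set z : Fin p → ℝ := Z.mulVec w with hz
  have hyw : ybar = S.mulVec z := by
    rw [hz, hw, mulVec_smul, mulVec_smul, mulVec_mulVec, ← hYZ, hybar]
  have hyy : vecMulVec ybar ybar = S * (replicateCol Unit z * replicateRow Unit ybar) := by
    rw [vecMulVec_eq Unit, ← Matrix.mul_assoc, ← replicateCol_mulVec, ← hyw]
  set N : Matrix (Fin p) (Fin p) ℝ := Sp * S - replicateCol Unit z * replicateRow Unit ybar with hN
  have hStN : St = S * N := by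
    rw [hSt, hN, Matrix.mul_sub, ← Matrix.mul_assoc, hSp1, ← hyy]
  have hStNT : St = Nᵀ * S := by
    conv_lhs => rw [← StT, hStN]
    rw [transpose_mul, ST]
  have F2 : Sp = S * (Sp * Sp) := by
    rw [← Matrix.mul_assoc, ← comm1, hSp2]
  have F3 : S * (S * Sp) = S := by
    rw [← comm1, ← Matrix.mul_assoc, hSp1]
  have e1 : Stp = Stp * Stp * St := by
    rw [Matrix.mul_assoc, comm2, ← Matrix.mul_assoc, hStp2]
  have F4 : Stp * (S * Sp) = Stp := by
    nth_rewrite 1 [e1]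
    rw [hStNT]
    simp only [Matrix.mul_assoc]
    rw [F3, ← hStNT]
    simp only [Matrix.mul_assoc] at e1
    exact e1.symm
  have F5 : (1 - Stp * St) * St = 0 := by
    rw [Matrix.sub_mul, Matrix.one_mul, Matrix.mul_assoc]
    have : Stp * (St * St) = St := by
      rw [← Matrix.mul_assoc, comm2, Matrix.mul_assoc, ← Matrix.mul_assoc, hStp1]
    rw [this, sub_self]
  have hSyy : S - St = vecMulVec ybar ybar := by rw [hSt]; abel
  have key : Stp - Sp = Stp * (S - St) * Sp - (1 - Stp * St) * Sp := by
    have hid : Stp - Sp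
        = Stp * (S - St) * Sp + Stp * (1 - S * Sp) - (1 - Stp * St) * Sp := by
      have h2 := hStp2
      have h2' := hSp2
      noncomm_ring [h2, h2']
    have hzero : Stp * (1 - S * Sp) = 0 := by
      rw [Matrix.mul_sub, Matrix.mul_one, F4, sub_self]
    rw [hid, hzero, add_zero]
  have term2 : (1 - Stp * St) * Sp
      = (1 - Stp * St) * vecMulVec ybar ybar * (Sp * Sp) := by
    have hSdecomp : S = St + vecMulVec ybar ybar := by rw [hSt]; abel
    conv_lhs => rw [F2, ← Matrix.mul_assoc]
    conv_lhs => rw [show (1 - Stp * St) * S = (1 - Stp * St) * vecMulVec ybar ybar by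
      rw [hSdecomp, Matrix.mul_add, F5, zero_add]]
  calc (Stp - Sp).rank
      = (Stp * (S - St) * Sp - (1 - Stp * St) * Sp).rank := by rw [key]
    _ ≤ (Stp * (S - St) * Sp).rank + ((1 - Stp * St) * Sp).rank :=
        matrix_rank_sub_le _ _
    _ ≤ 1 + 1 := by
        gcongr
        · rw [hSyy]; exact rank_one_aux _ _ _ _
        · rw [term2]; exact rank_one_aux _ _ _ _
    _ = 2 := rfl


local notation "E" => EuclideanSpace ℝ (Fin p)

-- orthonormal double-sum expansion
lemma inner_sum_sum (b : OrthonormalBasis (Fin p) ℝ (EuclideanSpace ℝ (Fin p)))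
    (s : Finset (Fin p)) (c d : Fin p → ℝ) :
    (inner ℝ (∑ i ∈ s, c i • b i) (∑ j ∈ s, d j • b j) : ℝ) = ∑ i ∈ s, c i * d i := by
  rw [sum_inner]
  refine Finset.sum_congr rfl fun i hi => ?_
  rw [inner_sum]
  have horth := orthonormal_iff_ite.mp b.orthonormal
  simp only [real_inner_smul_left, real_inner_smul_right, horth]
  rw [Finset.sum_eq_single i]
  · simp [mul_comm]
  · intro j hj hne; simp [if_neg (Ne.symm hne)]
  · intro h; exact absurd hi h

lemma repr_span_finset (b : OrthonormalBasis (Fin p) ℝ (EuclideanSpace ℝ (Fin p)))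
    (s : Finset (Fin p)) (x : EuclideanSpace ℝ (Fin p))
    (hx : x ∈ span ℝ (⇑b '' ↑s)) : x = ∑ i ∈ s, b.repr x i • b i := by
  have hx' : x ∈ span ℝ (⇑b.toBasis '' ↑s) := by rwa [b.coe_toBasis]
  have hsupp : ↑(b.toBasis.repr x).support ⊆ (↑s : Set (Fin p)) :=
    (b.toBasis.mem_span_image).mp hx'
  have key : ∑ i ∈ s, b.repr x i • b i = ∑ i : Fin p, b.repr x i • b i := by
    apply Finset.sum_subset (Finset.subset_univ s)
    intro i _ hi
    have h0 : b.repr x i = 0 := by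
      rw [← b.coe_toBasis_repr_apply]
      by_contra h
      exact hi (by exact_mod_cast hsupp (Finsupp.mem_support_iff.mpr h))
    rw [h0, zero_smul]
  rw [key, b.sum_repr]

lemma eig_apply {A : Matrix (Fin p) (Fin p) ℝ} (hA : A.IsHermitian) (i : Fin p) :
    Matrix.toEuclideanLin A (hA.eigenvectorBasis i)
      = hA.eigenvalues i • hA.eigenvectorBasis i := by
  simp [Matrix.toEuclideanLin_apply, hA.mulVec_eigenvectorBasis i]

lemma quad_expand {A : Matrix (Fin p) (Fin p) ℝ} (hA : A.IsHermitian) (s : Finset (Fin p))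
    (x : EuclideanSpace ℝ (Fin p))
    (hx : x ∈ span ℝ (⇑hA.eigenvectorBasis '' ↑s)) :
    (inner ℝ x (Matrix.toEuclideanLin A x) : ℝ)
        = ∑ i ∈ s, hA.eigenvalues i * (hA.eigenvectorBasis.repr x i)^2
      ∧ (inner ℝ x x : ℝ) = ∑ i ∈ s, (hA.eigenvectorBasis.repr x i)^2 := by
  set b := hA.eigenvectorBasis with hb
  set c : Fin p → ℝ := fun i => b.repr x i with hc
  have hxe : x = ∑ i ∈ s, c i • b i := repr_span_finset b s x hx
  have hfx : Matrix.toEuclideanLin A x = ∑ i ∈ s, (hA.eigenvalues i * c i) • b i := by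
    conv_lhs => rw [hxe]
    rw [map_sum]
    refine Finset.sum_congr rfl fun i _ => ?_
    rw [_root_.map_smul, eig_apply, smul_smul, mul_comm]
  constructor
  · rw [hfx]
    nth_rewrite 1 [hxe]
    rw [inner_sum_sum]
    refine Finset.sum_congr rfl fun i _ => ?_
    ring
  · nth_rewrite 1 [hxe]
    nth_rewrite 1 [hxe]
    rw [inner_sum_sum]
    refine Finset.sum_congr rfl fun i _ => ?_
    ring

lemma claimA {A : Matrix (Fin p) (Fin p) ℝ} (hA : A.IsHermitian) (t : ℝ)
    (x : EuclideanSpace ℝ (Fin p))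
    (hx : x ∈ span ℝ (⇑hA.eigenvectorBasis ''
        ↑(Finset.univ.filter fun i => hA.eigenvalues i ≤ t))) :
    (inner ℝ x (Matrix.toEuclideanLin A x) : ℝ) ≤ t * (inner ℝ x x : ℝ) := by
  obtain ⟨h1, h2⟩ := quad_expand hA _ x hx
  rw [h1, h2, Finset.mul_sum]
  refine Finset.sum_le_sum fun i hi => ?_
  have hle : hA.eigenvalues i ≤ t := (Finset.mem_filter.mp hi).2
  exact mul_le_mul_of_nonneg_right hle (sq_nonneg _)

lemma claimB {B : Matrix (Fin p) (Fin p) ℝ} (hB : B.IsHermitian) (t : ℝ)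
    (x : EuclideanSpace ℝ (Fin p)) (hxne : x ≠ 0)
    (hx : x ∈ span ℝ (⇑hB.eigenvectorBasis ''
        ↑(Finset.univ.filter fun i => t < hB.eigenvalues i))) :
    t * (inner ℝ x x : ℝ) < (inner ℝ x (Matrix.toEuclideanLin B x) : ℝ) := by
  obtain ⟨h1, h2⟩ := quad_expand hB _ x hx
  rw [h1, h2, Finset.mul_sum]
  have hex : ∃ i ∈ Finset.univ.filter fun i => t < hB.eigenvalues i,
      hB.eigenvectorBasis.repr x i ≠ 0 := by
    by_contra h
    push_neg at h
    apply hxne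
    rw [repr_span_finset hB.eigenvectorBasis _ x hx]
    exact Finset.sum_eq_zero fun i hi => by rw [h i hi, zero_smul]
  obtain ⟨i, hi, hci⟩ := hex
  apply Finset.sum_lt_sum
  · intro j hj
    exact mul_le_mul_of_nonneg_right (le_of_lt (Finset.mem_filter.mp hj).2) (sq_nonneg _)
  · refine ⟨i, hi, mul_lt_mul_of_pos_right (Finset.mem_filter.mp hi).2 ?_⟩
    positivity

lemma finrank_span_obasis_image (b : OrthonormalBasis (Fin p) ℝ (EuclideanSpace ℝ (Fin p)))
    (s : Finset (Fin p)) :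
    finrank ℝ (span ℝ (⇑b '' ↑s)) = s.card := by
  classical
  have hinj : Function.Injective ⇑b := by
    rw [← b.coe_toBasis]; exact b.toBasis.injective
  have himg : ⇑b '' ↑s = ↑(s.image ⇑b) := by rw [Finset.coe_image]
  rw [himg, finrank_span_finset_eq_card, Finset.card_image_of_injective _ hinj]
  have hli : LinearIndepOn ℝ id (Set.range ⇑b) := by
    have := b.toBasis.linearIndependent
    rw [b.coe_toBasis] at this
    exact this.linearIndepOn_id
  refine hli.mono ?_
  intro x hx
  rcases Finset.mem_image.mp (Finset.mem_coe.mp hx) with ⟨i, _, rfl⟩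
  exact Set.mem_range_self i

lemma rank_toEuclideanLin (M : Matrix (Fin p) (Fin p) ℝ) :
    finrank ℝ (LinearMap.range (Matrix.toEuclideanLin M)) = M.rank := by
  rw [Matrix.toEuclideanLin_eq_toLin,
    ← Matrix.rank_eq_finrank_range_toLin M (PiLp.basisFun 2 ℝ (Fin p)) (PiLp.basisFun 2 ℝ (Fin p))]

lemma count_le_count_add_rank {A B : Matrix (Fin p) (Fin p) ℝ}
    (hA : A.IsHermitian) (hB : B.IsHermitian) (t : ℝ) :
    (Finset.univ.filter fun i => hA.eigenvalues i ≤ t).card ≤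
    (Finset.univ.filter fun i => hB.eigenvalues i ≤ t).card + (A - B).rank := by
  classical
  set sA := Finset.univ.filter fun i => hA.eigenvalues i ≤ t with hsA
  set sB := Finset.univ.filter fun i => hB.eigenvalues i ≤ t with hsB
  set sB' := Finset.univ.filter fun i => t < hB.eigenvalues i with hsB'
  set VA : Submodule ℝ (EuclideanSpace ℝ (Fin p)) :=
    span ℝ (⇑hA.eigenvectorBasis '' ↑sA) with hVA
  set WB : Submodule ℝ (EuclideanSpace ℝ (Fin p)) :=
    span ℝ (⇑hB.eigenvectorBasis '' ↑sB') with hWB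
  set K : Submodule ℝ (EuclideanSpace ℝ (Fin p)) :=
    LinearMap.ker (Matrix.toEuclideanLin (A - B)) with hK
  have htriv : VA ⊓ (WB ⊓ K) = ⊥ := by
    rw [eq_bot_iff]
    rintro x ⟨hx1, hx2, hx3⟩
    rw [Submodule.mem_bot]
    by_contra hxne
    have hAB : Matrix.toEuclideanLin A x = Matrix.toEuclideanLin B x := by
      have h0 : Matrix.toEuclideanLin (A - B) x = 0 := hx3
      rw [map_sub, LinearMap.sub_apply, sub_eq_zero] at h0
      exact h0
    have h1 := claimA hA t x hx1
    have h2 := claimB hB t x hxne hx2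
    rw [hAB] at h1
    linarith
  have dVA : finrank ℝ VA = sA.card := finrank_span_obasis_image _ _
  have dWB : finrank ℝ WB = sB'.card := finrank_span_obasis_image _ _
  have dK : finrank ℝ K + (A - B).rank = p := by
    have h := LinearMap.finrank_range_add_finrank_ker (Matrix.toEuclideanLin (A - B))
    rw [rank_toEuclideanLin, finrank_euclideanSpace, Fintype.card_fin] at h
    rw [hK]
    omega
  have hfE : finrank ℝ (EuclideanSpace ℝ (Fin p)) = p := by
    rw [finrank_euclideanSpace, Fintype.card_fin]
  have hsum1 : finrank ℝ WB + finrank ℝ K ≤ finrank ℝ (WB ⊓ K : Submodule ℝ _) + p := by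
    have h1 := Submodule.finrank_sup_add_finrank_inf_eq WB K
    have h2 : finrank ℝ (WB ⊔ K : Submodule ℝ _) ≤ p := le_trans (Submodule.finrank_le _) (le_of_eq hfE)
    omega
  have hsum2 : finrank ℝ VA + finrank ℝ (WB ⊓ K : Submodule ℝ _) ≤
      finrank ℝ (VA ⊓ (WB ⊓ K) : Submodule ℝ _) + p := by
    have h1 := Submodule.finrank_sup_add_finrank_inf_eq VA (WB ⊓ K)
    have h2 : finrank ℝ (VA ⊔ (WB ⊓ K) : Submodule ℝ _) ≤ p := le_trans (Submodule.finrank_le _) (le_of_eq hfE)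
    omega
  have h0 : finrank ℝ (VA ⊓ (WB ⊓ K) : Submodule ℝ _) = 0 := by
    rw [htriv]; exact finrank_bot ℝ _
  have hcards : sB.card + sB'.card = p := by
    have := Finset.card_filter_add_card_filter_not
      (s := (Finset.univ : Finset (Fin p))) (p := fun i => hB.eigenvalues i ≤ t)
    rw [Finset.card_univ, Fintype.card_fin] at this
    rw [hsB, hsB']
    convert this using 3
    · ext i
      simp [not_le]
  omega


lemma matrix_rank_neg (M : Matrix (Fin p) (Fin p) ℝ) : (-M).rank = M.rank := by
  have h : LinearMap.range (-M).mulVecLin = LinearMap.range M.mulVecLin := by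
    ext x
    constructor <;> rintro ⟨v, rfl⟩ <;>
      exact ⟨-v, by simp [Matrix.mulVecLin_apply, Matrix.neg_mulVec, Matrix.mulVec_neg]⟩
  rw [Matrix.rank, Matrix.rank, h]

/-- Empirical spectral distribution function of a real symmetric matrix:
`F^A(t) = (1/p) · #{i : λᵢ(A) ≤ t}`. -/
noncomputable def esdF {p : ℕ} {A : Matrix (Fin p) (Fin p) ℝ}
    (hA : A.IsHermitian) (t : ℝ) : ℝ :=
  (Finset.univ.filter fun i => hA.eigenvalues i ≤ t).card / p

theorem stmt_0 {p n : ℕ} (hpn : n < p) (Y : Matrix (Fin p) (Fin n) ℝ)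
    (hY : IsUnit (Yᵀ * Y))
    (S : Matrix (Fin p) (Fin p) ℝ) (hS : S = ((n : ℝ)⁻¹) • (Y * Yᵀ))
    (ybar : Fin p → ℝ) (hybar : ybar = ((n : ℝ)⁻¹) • Y.mulVec (fun _ => (1 : ℝ)))
    (St : Matrix (Fin p) (Fin p) ℝ) (hSt : St = S - vecMulVec ybar ybar)
    (Sp Stp : Matrix (Fin p) (Fin p) ℝ)
    (hSp1 : S * Sp * S = S) (hSp2 : Sp * S * Sp = Sp)
    (hSp3 : (S * Sp)ᵀ = S * Sp) (hSp4 : (Sp * S)ᵀ = Sp * S)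
    (hStp1 : St * Stp * St = St) (hStp2 : Stp * St * Stp = Stp)
    (hStp3 : (St * Stp)ᵀ = St * Stp) (hStp4 : (Stp * St)ᵀ = Stp * St)
    (hSpH : Sp.IsHermitian) (hStpH : Stp.IsHermitian) :
    ∀ t : ℝ, |esdF hStpH t - esdF hSpH t| ≤ 2 / p := by
  intro t
  have hr : (Stp - Sp).rank ≤ 2 :=
    rank_diff_le_two Y hY S hS ybar hybar St hSt Sp Stp hSp1 hSp2 hSp3
      hStp1 hStp2 hStp3 hSpH hStpH
  have hr2 : (Sp - Stp).rank ≤ 2 := by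
    rw [show Sp - Stp = -(Stp - Sp) by abel, matrix_rank_neg]
    exact hr
  have h1 := count_le_count_add_rank hStpH hSpH t
  have h2 := count_le_count_add_rank hSpH hStpH t
  have h1' : (Finset.univ.filter fun i => hStpH.eigenvalues i ≤ t).card ≤
      (Finset.univ.filter fun i => hSpH.eigenvalues i ≤ t).card + 2 := by omega
  have h2' : (Finset.univ.filter fun i => hSpH.eigenvalues i ≤ t).card ≤
      (Finset.univ.filter fun i => hStpH.eigenvalues i ≤ t).card + 2 := by omega
  have hp0 : (0 : ℝ) < p := by
    exact_mod_cast Nat.lt_of_le_of_lt (Nat.zero_le n) hpn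
  unfold esdF
  rw [div_sub_div_same, abs_div, abs_of_pos hp0]
  gcongr
  rw [abs_le]
  constructor
  · have : ((Finset.univ.filter fun i => hSpH.eigenvalues i ≤ t).card : ℝ) ≤
        ((Finset.univ.filter fun i => hStpH.eigenvalues i ≤ t).card : ℝ) + 2 := by
      exact_mod_cast h2'
    linarith
  · have : ((Finset.univ.filter fun i => hStpH.eigenvalues i ≤ t).card : ℝ) ≤
        ((Finset.univ.filter fun i => hSpH.eigenvalues i ≤ t).card : ℝ) + 2 := by
      exact_mod_cast h1'
    linarith
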